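/- Let ab be an edge in a finite simplicial complex K, let K̂ = K ∪ (a * closure(St b)) be the complex obtained from K by adding all cones from a over simplices of the closed star of b, and let i: K ↪ K̂ be the inclusion. If ab satisfies the p-link condition in K, then the induced homomorphism i_*: H_p(K) → H_p(K̂) on p-th simplicial homology with integer coefficients is injective. -/

import Mathlib

namespace ECpaper

variable {V : Type*} [LinearOrder V]

/-- A finite abstract simplicial complex on a (linearly ordered) vertex type `V`:
a finite collection of nonempty finite subsets of `V` such that every nonempty
subset of a member is a member. -/
structure SC (V : Type*) [LinearOrder V] where
  faces : Finset (Finset V)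
  nonempty_of_mem : ∀ σ ∈ faces, σ.Nonempty
  down_closed : ∀ σ ∈ faces, ∀ τ ⊆ σ, τ.Nonempty → τ ∈ faces

/-- The star of a set `X` of simplices: all simplices of `K` having some member
of `X` as a face. -/
def starOf (K : SC V) (X : Set (Finset V)) : Set (Finset V) :=
  {τ | τ ∈ K.faces ∧ ∃ σ ∈ X, σ ⊆ τ}

/-- The closure of a set `S` of simplices of `K`: all simplices of `S` together
with all of their faces. -/
def closureOf (K : SC V) (S : Set (Finset V)) : Set (Finset V) :=
  {τ | τ ∈ K.faces ∧ ∃ σ ∈ S, τ ⊆ σ}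

/-- The link of a set `X` of simplices: the simplices in the closure of the star of `X`
that do not belong to the star of the closure of `X`. -/
def linkOf (K : SC V) (X : Set (Finset V)) : Set (Finset V) :=
  closureOf K (starOf K X) \ starOf K (closureOf K X)

/-- The link of a vertex `a`. -/
def linkV (K : SC V) (a : V) : Set (Finset V) := linkOf K {{a}}

/-- The link of the edge `ab`. -/
def linkE (K : SC V) (a b : V) : Set (Finset V) := linkOf K {({a, b} : Finset V)}

/-- The link condition for the edge `ab` in `K`: `Lk a ∩ Lk b = Lk ab`. -/
def LinkCond (K : SC V) (a b : V) : Prop :=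
  linkV K a ∩ linkV K b = linkE K a b

/-- The `p`-link condition for the edge `ab` in `K`: either `p ≤ 0`, or `p > 0` and every
`(p-1)`-simplex (i.e. simplex of cardinality `p`) of `Lk a ∩ Lk b` lies in `Lk ab`. -/
def PLink (K : SC V) (a b : V) (p : ℤ) : Prop :=
  p ≤ 0 ∨ (0 < p ∧ ∀ ξ ∈ linkV K a ∩ linkV K b, (ξ.card : ℤ) = p → ξ ∈ linkE K a b)

/-- The dimension of a simplicial complex. -/
def dimSC (K : SC V) : ℤ := ((K.faces.sup Finset.card : ℕ) : ℤ) - 1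

/-- The vertex map of the contraction of the edge `ab`: identity everywhere except
that `b` is sent to `a`. -/
def contr (a b : V) : V → V := fun v => if v = b then a else v

/-- The ambient module of simplicial chains (over all dimensions) with `ℤ` coefficients;
the basis element corresponding to a finset is that simplex with its vertices in
increasing order. -/
abbrev FChain (V : Type*) [LinearOrder V] := Finset V →₀ ℤ

/-- The boundary of a single simplex (zero on vertices and on the empty set). -/
noncomputable def bndOf (σ : Finset V) : FChain V :=
  if σ.card ≤ 1 then 0
  else ∑ v ∈ σ, ((-1 : ℤ) ^ ((σ.filter (fun x => x < v)).card)) •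
        Finsupp.single (σ.erase v) (1 : ℤ)

/-- The simplicial boundary operator. -/
noncomputable def bnd : FChain V →ₗ[ℤ] FChain V :=
  Finsupp.lsum ℤ fun σ => LinearMap.toSpanSingleton ℤ (FChain V) (bndOf σ)

/-- The group of `p`-chains of `K`: the span of the `p`-simplices of `K`. -/
noncomputable def chains (K : SC V) (p : ℕ) : Submodule ℤ (FChain V) :=
  Submodule.span ℤ {x : FChain V | ∃ σ ∈ K.faces, σ.card = p + 1 ∧ x = Finsupp.single σ 1}

/-- The group of `p`-cycles of `K`. -/
noncomputable def cycles (K : SC V) (p : ℕ) : Submodule ℤ (FChain V) :=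
  chains K p ⊓ LinearMap.ker bnd

/-- The group of `p`-boundaries of `K`. -/
noncomputable def bdries (K : SC V) (p : ℕ) : Submodule ℤ (FChain V) :=
  (chains K (p + 1)).map bnd

/-- The `p`-th simplicial homology group of `K` with integer coefficients. -/
abbrev Hmlgy (K : SC V) (p : ℕ) : Type _ :=
  ↥(cycles K p) ⧸ ((bdries K p).comap (cycles K p).subtype)

/-- The homology class of a cycle. -/
noncomputable def HmlgyMk (K : SC V) (p : ℕ) (z : FChain V) (hz : z ∈ cycles K p) :
    Hmlgy K p :=
  Submodule.Quotient.mk ⟨z, hz⟩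

/-- The number of inversions in a list. -/
def inversions : List V → ℕ
  | [] => 0
  | x :: xs => (xs.filter (fun y => decide (y < x))).length + inversions xs

/-- Value of the chain map induced by a vertex map `f` on a single simplex: zero if `f` is
not injective on the simplex, and otherwise the image simplex signed by the permutation
rearranging the images of the vertices (in increasing order) into increasing order. -/
noncomputable def cmapOf (f : V → V) (σ : Finset V) : FChain V :=
  if (σ.image f).card = σ.card then
    ((-1 : ℤ) ^ inversions ((σ.sort (· ≤ ·)).map f)) • Finsupp.single (σ.image f) 1
  else 0

/-- The chain map induced by a vertex map `f`. -/
noncomputable def cmap (f : V → V) : FChain V →ₗ[ℤ] FChain V :=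
  Finsupp.lsum ℤ fun σ => LinearMap.toSpanSingleton ℤ (FChain V) (cmapOf f σ)

/-- Relative `p`-cycles of the pair `(L, L0)`: `p`-chains of `L` whose boundary is a
chain of `L0`. -/
noncomputable def relCycles (L L0 : SC V) (p : ℕ) : Submodule ℤ (FChain V) :=
  chains L p ⊓ Submodule.comap bnd (chains L0 (p - 1))

/-- Relative `p`-boundaries of the pair `(L, L0)`: boundaries of `(p+1)`-chains of `L`
together with `p`-chains of `L0`. -/
noncomputable def relBdries (L L0 : SC V) (p : ℕ) : Submodule ℤ (FChain V) :=
  (chains L (p + 1)).map bnd ⊔ chains L0 p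

/-- The `p`-th relative simplicial homology group of the pair `(L, L0)` with
integer coefficients. -/
abbrev RelHmlgy (L L0 : SC V) (p : ℕ) : Type _ :=
  ↥(relCycles L L0 p) ⧸ ((relBdries L L0 p).comap (relCycles L L0 p).subtype)

/-- The relative homology class of a relative cycle. -/
noncomputable def RelHmlgyMk (L L0 : SC V) (p : ℕ) (z : FChain V)
    (hz : z ∈ relCycles L L0 p) : RelHmlgy L L0 p :=
  Submodule.Quotient.mk ⟨z, hz⟩

/-- A pure simplicial complex of dimension `p`: it is formed by a (nonempty) collection of
`p`-simplices and all their proper faces. -/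
def IsPure (L : SC V) (p : ℕ) : Prop :=
  (∀ σ ∈ L.faces, ∃ τ ∈ L.faces, σ ⊆ τ ∧ τ.card = p + 1) ∧ ∃ σ ∈ L.faces, σ.card = p + 1

/-- An orientation of a complex: a choice of sign (`1` if the chosen orientation of the simplex
is the increasing order of the vertices, `-1` if the opposite) for each simplex. -/
def IsOrientation (K : SC V) (o : Finset V → ℤ) : Prop :=
  ∀ σ ∈ K.faces, o σ = 1 ∨ o σ = -1

/-- Incidence sign (with respect to increasing vertex order) between a codimension-one
face `σ` and a simplex `τ`: `(-1)^i` where `i` is the position in `τ` of the vertex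
missing in `σ`. -/
def incSign (σ τ : Finset V) : ℤ :=
  ∏ v ∈ τ \ σ, (-1 : ℤ) ^ ((τ.filter (fun x => x < v)).card)

/-- An edge of the graph `G_q(K)`: a pair of a `(q-1)`-simplex and an incident `q`-simplex. -/
def IsGEdge (K : SC V) (q : ℕ) (e : Finset V × Finset V) : Prop :=
  e.1 ∈ K.faces ∧ e.2 ∈ K.faces ∧ e.1.card = q ∧ e.2.card = q + 1 ∧ e.1 ⊆ e.2

/-- A circuit of the graph `G_q(K)`: a set of edges of `G_q(K)` in which every vertex of the
graph has even degree. -/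
def IsCircuit (K : SC V) (q : ℕ) (C : Finset (Finset V × Finset V)) : Prop :=
  (∀ e ∈ C, IsGEdge K q e) ∧
  ∀ ρ : Finset V,
    Even ((C.filter (fun e => e.1 = ρ)).card + (C.filter (fun e => e.2 = ρ)).card)

/-- Weight of an edge of `G_q(K)` under the orientation `o`. -/
def edgeWeight (o : Finset V → ℤ) (e : Finset V × Finset V) : ℤ :=
  o e.1 * o e.2 * incSign e.1 e.2

/-- Total weight of a circuit under the orientation `o`. -/
def circWeight (o : Finset V → ℤ) (C : Finset (Finset V × Finset V)) : ℤ :=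
  ∑ e ∈ C, edgeWeight o e

/-- A circuit is b-even if the sum of its edge weights is `0 mod 4`. -/
def BEven (o : Finset V → ℤ) (C : Finset (Finset V × Finset V)) : Prop :=
  circWeight o C % 4 = 0

/-- A circuit is b-odd if the sum of its edge weights is `2 mod 4`. -/
def BOdd (o : Finset V → ℤ) (C : Finset (Finset V × Finset V)) : Prop :=
  circWeight o C % 4 = 2

/-- A circuit `C` of `G_q(K)` has a chord: an edge of the graph not in `C` both of whose
endpoints are vertices of `C`. -/
def HasChord (K : SC V) (q : ℕ) (C : Finset (Finset V × Finset V)) : Prop :=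
  ∃ e : Finset V × Finset V, IsGEdge K q e ∧ e ∉ C ∧
    (∃ c ∈ C, c.1 = e.1) ∧ (∃ c ∈ C, c.2 = e.2)

/-- The boundary matrix `[∂_{p+1}]` of an oriented complex: rows indexed by `p`-simplices,
columns by `(p+1)`-simplices, entries the signed incidence numbers. -/
def boundaryMatrixSucc (K : SC V) (o : Finset V → ℤ) (p : ℕ) :
    Matrix {σ : Finset V // σ ∈ K.faces ∧ σ.card = p + 1}
      {τ : Finset V // τ ∈ K.faces ∧ τ.card = p + 2} ℤ :=
  fun σ τ => if σ.1 ⊆ τ.1 then edgeWeight o (σ.1, τ.1) else 0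

/-- `σ` is a collapsing simplex (w.r.t. contraction of `ab`). -/
def IsCollapsing (a b : V) (σ : Finset V) : Prop := a ∈ σ ∧ b ∈ σ

/-- `σ` and `σ'` are mirror simplices (w.r.t. contraction of `ab`). -/
def IsMirror (a b : V) (σ σ' : Finset V) : Prop :=
  a ∈ σ ∧ b ∈ σ' ∧ σ = insert a (σ'.erase b)

/-- The circuit `C` of `G_{p+1}(K)` contains (an edge incident to) a collapsing `p`-vertex. -/
def ContainsCollapsingLow (a b : V) (C : Finset (Finset V × Finset V)) : Prop :=
  ∃ e ∈ C, IsCollapsing a b e.1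

/-- The circuit `C` of `G_{p+1}(K)` contains a pair of `(p+1)`-vertices that are mirrors of
each other. -/
def ContainsMirrorHigh (a b : V) (C : Finset (Finset V × Finset V)) : Prop :=
  ∃ e ∈ C, ∃ e' ∈ C, IsMirror a b e.2 e'.2



noncomputable section Aux
open Finsupp

/-- sign of vertex `v` relative to simplex `σ`. -/
def sgn (σ : Finset V) (v : V) : ℤ := (-1 : ℤ) ^ ((σ.filter (fun x => x < v)).card)

lemma sgn_mul_self (σ : Finset V) (v : V) : sgn σ v * sgn σ v = 1 := by
  simp [sgn, ← pow_add, ← two_mul, pow_mul]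

def coneOf (a : V) (σ : Finset V) : FChain V :=
  if a ∈ σ then 0 else sgn (insert a σ) a • Finsupp.single (insert a σ) 1

def coneA (a : V) : FChain V →ₗ[ℤ] FChain V :=
  Finsupp.lsum ℤ fun σ => LinearMap.toSpanSingleton ℤ (FChain V) (coneOf a σ)

def stripOf (a : V) (τ : Finset V) : FChain V :=
  if a ∈ τ then sgn τ a • Finsupp.single (τ.erase a) 1 else 0

def stripA (a : V) : FChain V →ₗ[ℤ] FChain V :=
  Finsupp.lsum ℤ fun τ => LinearMap.toSpanSingleton ℤ (FChain V) (stripOf a τ)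

def filtL (P : Finset V → Prop) [DecidablePred P] : FChain V →ₗ[ℤ] FChain V :=
  Finsupp.lsum ℤ fun σ => LinearMap.toSpanSingleton ℤ (FChain V)
    (if P σ then Finsupp.single σ 1 else 0)

def eps : FChain V →ₗ[ℤ] ℤ := Finsupp.lsum ℤ fun _ => LinearMap.id

@[simp] lemma bnd_single (σ : Finset V) (c : ℤ) :
    bnd (Finsupp.single σ c) = c • bndOf σ := by
  simp [bnd, LinearMap.toSpanSingleton_apply]

@[simp] lemma coneA_single (a : V) (σ : Finset V) (c : ℤ) :
    coneA a (Finsupp.single σ c) = c • coneOf a σ := by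
  simp [coneA, LinearMap.toSpanSingleton_apply]

@[simp] lemma stripA_single (a : V) (τ : Finset V) (c : ℤ) :
    stripA a (Finsupp.single τ c) = c • stripOf a τ := by
  simp [stripA, LinearMap.toSpanSingleton_apply]

@[simp] lemma filtL_single (P : Finset V → Prop) [DecidablePred P] (σ : Finset V) (c : ℤ) :
    filtL P (Finsupp.single σ c) = if P σ then Finsupp.single σ c else 0 := by
  by_cases h : P σ <;> simp [filtL, LinearMap.toSpanSingleton_apply, h, Finsupp.smul_single]

@[simp] lemma eps_single (σ : Finset V) (c : ℤ) : eps (Finsupp.single σ c) = c := by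
  simp [eps]

lemma sgn_insert {a : V} {σ : Finset V} (ha : a ∉ σ) (v : V) :
    sgn (insert a σ) v = (if a < v then -1 else 1) * sgn σ v := by
  unfold sgn
  rw [Finset.filter_insert]
  split
  · rw [Finset.card_insert_of_notMem (fun h => ha (Finset.mem_filter.1 h).1)]
    rw [pow_succ]; ring
  · ring

lemma sgn_erase {w : V} {σ : Finset V} (hw : w ∈ σ) (v : V) :
    sgn σ v = (if w < v then -1 else 1) * sgn (σ.erase w) v := by
  conv_lhs => rw [← Finset.insert_erase hw]
  rw [sgn_insert (Finset.notMem_erase w σ) v]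

lemma sgn_insert_self {a : V} (σ : Finset V) :
    sgn (insert a σ) a = sgn σ a := by
  unfold sgn
  congr 1
  rw [Finset.filter_insert, if_neg (lt_irrefl a)]
lemma bndOf_eq {σ : Finset V} (h : 2 ≤ σ.card) :
    bndOf σ = ∑ v ∈ σ, sgn σ v • Finsupp.single (σ.erase v) (1:ℤ) := by
  rw [bndOf, if_neg (by omega)]; rfl

lemma sgn_pair_anti {v w : V} {σ : Finset V} (hv : v ∈ σ) (hw : w ∈ σ) (hvw : v ≠ w) :
    sgn σ v * sgn (σ.erase v) w + sgn σ w * sgn (σ.erase w) v = 0 := by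
  have h1 : sgn σ w = (if v < w then -1 else 1) * sgn (σ.erase v) w := sgn_erase hv w
  have h2 : sgn σ v = (if w < v then -1 else 1) * sgn (σ.erase w) v := sgn_erase hw v
  rcases hvw.lt_or_gt with h | h
  · rw [if_pos h] at h1; rw [if_neg (asymm h)] at h2
    rw [h1, h2]; ring
  · rw [if_neg (asymm h)] at h1; rw [if_pos h] at h2
    rw [h1, h2]; ring

lemma bnd_bndOf (σ : Finset V) : bnd (bndOf σ) = 0 := by
  by_cases h1 : σ.card ≤ 1
  · rw [bndOf, if_pos h1, map_zero]
  push_neg at h1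
  rw [bndOf_eq (by omega), map_sum]
  by_cases h2 : σ.card = 2
  · refine Finset.sum_eq_zero fun v hv => ?_
    rw [map_smul, bnd_single, bndOf, if_pos (by rw [Finset.card_erase_of_mem hv]; omega)]
    simp
  have h3 : 3 ≤ σ.card := by omega
  have key : ∀ v ∈ σ, bnd ((sgn σ v) • Finsupp.single (σ.erase v) (1:ℤ)) =
      ∑ w ∈ σ.erase v, (sgn σ v * sgn (σ.erase v) w) • Finsupp.single ((σ.erase v).erase w) (1:ℤ) := by
    intro v hv
    rw [map_smul, bnd_single, one_smul,
      bndOf_eq (by rw [Finset.card_erase_of_mem hv]; omega), Finset.smul_sum]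
    refine Finset.sum_congr rfl fun w hw => ?_
    rw [smul_smul]
  rw [Finset.sum_congr rfl key,
    ← Finset.sum_sigma σ (fun x => σ.erase x)
      (fun i => (sgn σ i.1 * sgn (σ.erase i.1) i.2) • Finsupp.single ((σ.erase i.1).erase i.2) (1:ℤ))]
  refine Finset.sum_involution (fun i hi => ⟨i.2, i.1⟩) ?_ ?_ ?_ ?_
  · rintro ⟨v, w⟩ hi
    rw [Finset.mem_sigma] at hi
    obtain ⟨hv, hw⟩ := hi
    have hwσ : w ∈ σ := Finset.mem_of_mem_erase hw
    have hne : v ≠ w := fun h => (Finset.ne_of_mem_erase hw) h.symm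
    dsimp only
    rw [Finset.erase_right_comm (a := v) (b := w), ← add_smul, sgn_pair_anti hv hwσ hne, zero_smul]
  · rintro ⟨v, w⟩ hi _
    rw [Finset.mem_sigma] at hi
    intro h
    have : w = v := congrArg Sigma.fst h
    exact (Finset.ne_of_mem_erase hi.2) this
  · rintro ⟨v, w⟩ hi
    rw [Finset.mem_sigma] at hi ⊢
    have hwσ : w ∈ σ := Finset.mem_of_mem_erase hi.2
    exact ⟨hwσ, Finset.mem_erase.2 ⟨fun h => (Finset.ne_of_mem_erase hi.2) h.symm, hi.1⟩⟩
  · rintro ⟨v, w⟩ hi; rfl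
lemma erase_insert_comm' {a v : V} {σ : Finset V} (hv : v ∈ σ) (hav : a ≠ v) :
    (insert a σ).erase v = insert a (σ.erase v) := by
  ext x
  simp only [Finset.mem_erase, Finset.mem_insert]
  constructor
  · rintro ⟨hx, rfl | hx2⟩
    · exact Or.inl rfl
    · exact Or.inr ⟨hx, hx2⟩
  · rintro (rfl | ⟨hx, hx2⟩)
    · exact ⟨hav, Or.inl rfl⟩
    · exact ⟨hx, Or.inr hx2⟩

/-- Core cone-boundary identity on a single simplex, `card σ ≥ 2`. -/
lemma bnd_coneOf {a : V} {σ : Finset V} (ha : a ∉ σ) (hc : 2 ≤ σ.card) :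
    bnd (coneOf a σ) = Finsupp.single σ 1 - coneA a (bndOf σ) := by
  have hins : (insert a σ).card = σ.card + 1 := Finset.card_insert_of_notMem ha
  rw [coneOf, if_neg ha, map_smul, bnd_single, one_smul, bndOf_eq (by omega)]
  rw [Finset.sum_insert ha]
  have e1 : (insert a σ).erase a = σ := Finset.erase_insert ha
  rw [e1, sgn_insert_self]
  rw [bndOf_eq hc, map_sum]
  have key : ∀ v ∈ σ, coneA a ((sgn σ v) • Finsupp.single (σ.erase v) (1:ℤ)) =
      (- (sgn σ a * sgn (insert a σ) v)) • Finsupp.single ((insert a σ).erase v) (1:ℤ) := by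
    intro v hv
    have hav : a ≠ v := fun h => ha (h ▸ hv)
    have haev : a ∉ σ.erase v := fun h => ha (Finset.mem_of_mem_erase h)
    rw [map_smul, coneA_single, one_smul, coneOf, if_neg haev, smul_smul,
      erase_insert_comm' hv hav]
    congr 1
    have h1 : sgn (insert a (σ.erase v)) a = sgn (σ.erase v) a := sgn_insert_self _
    have h2 : sgn σ a = (if v < a then -1 else 1) * sgn (σ.erase v) a := sgn_erase hv a
    have h3 : sgn (insert a σ) v = (if a < v then -1 else 1) * sgn σ v := sgn_insert ha v
    rw [h1, h2, h3]
    have hs1 : sgn (σ.erase v) a * sgn (σ.erase v) a = 1 := sgn_mul_self _ _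
    have hs2 : sgn σ v * sgn σ v = 1 := sgn_mul_self _ _
    rcases hav.lt_or_gt with h | h
    · rw [if_neg (asymm h), if_pos h]; nlinarith [hs1, hs2]
    · rw [if_pos h, if_neg (asymm h)]; nlinarith [hs1, hs2]
  rw [Finset.sum_congr rfl key]
  have : ∀ v ∈ σ, sgn σ a • ((sgn (insert a σ) v) • Finsupp.single ((insert a σ).erase v) (1:ℤ))
      = - ((- (sgn σ a * sgn (insert a σ) v)) • Finsupp.single ((insert a σ).erase v) (1:ℤ)) := by
    intro v hv; rw [smul_smul, neg_smul, neg_neg]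
  rw [smul_add, Finset.smul_sum, Finset.sum_congr rfl this, smul_smul, sgn_mul_self, one_smul,
    Finset.sum_neg_distrib]
  abel

/-- Cone-boundary identity on a single vertex. -/
lemma bnd_coneOf_vertex {a v : V} (hav : a ≠ v) :
    bnd (coneOf a {v}) = Finsupp.single {v} 1 - Finsupp.single {a} (1:ℤ) := by
  have ha : a ∉ ({v} : Finset V) := by simp [hav]
  have hcard : (insert a {v} : Finset V).card = 2 := by
    rw [Finset.card_insert_of_notMem ha, Finset.card_singleton]
  rw [coneOf, if_neg ha, map_smul, bnd_single, one_smul,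
    bndOf_eq (by omega), Finset.sum_insert ha, Finset.sum_singleton,
    Finset.erase_insert ha, sgn_insert_self]
  have h1 : (insert a {v} : Finset V).erase v = {a} := by
    rw [erase_insert_comm' (Finset.mem_singleton_self v) hav, Finset.erase_singleton,
      Finset.insert_empty]
  rw [h1]
  have h2 : sgn ({v} : Finset V) a * sgn (insert a {v}) v = -1 := by
    have h3 : sgn (insert a {v}) v = (if a < v then -1 else 1) * sgn {v} v := sgn_insert ha v
    have h4 : sgn ({v} : Finset V) v = 1 := by
      unfold sgn
      rw [Finset.filter_singleton, if_neg (lt_irrefl v), Finset.card_empty, pow_zero]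
    have h5 : sgn ({v} : Finset V) a = (if v < a then -1 else 1) := by
      unfold sgn
      rw [Finset.filter_singleton]
      split <;> simp_all
    rw [h3, h4, h5]
    rcases hav.lt_or_gt with h | h
    · rw [if_neg (asymm h), if_pos h]; ring
    · rw [if_pos h, if_neg (asymm h)]; ring
  have := sgn_mul_self ({v} : Finset V) a
  rw [smul_add, smul_smul, sgn_mul_self, one_smul, smul_smul, h2]
  abel
lemma eps_bndOf {σ : Finset V} (hc : σ.card = 2) : eps (bndOf σ) = 0 := by
  obtain ⟨x, y, hxy, rfl⟩ := Finset.card_eq_two.1 hc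
  have hx : x ∉ ({y} : Finset V) := by simp [hxy]
  rw [bndOf_eq (by omega), Finset.sum_insert hx, Finset.sum_singleton, map_add, map_smul,
    map_smul, eps_single, eps_single]
  rcases hxy.lt_or_gt with h | h <;>
    simp [sgn, Finset.filter_insert, Finset.filter_singleton, lt_irrefl, h, asymm h]

/-- roundtrip: cone after strip recovers the part containing `a`. -/
lemma coneA_stripA (a : V) (x : FChain V) :
    coneA a (stripA a x) = filtL (fun σ => a ∈ σ) x := by
  induction x using Finsupp.induction_linear with
  | zero => simp
  | add f g hf hg => rw [map_add, map_add, map_add, hf, hg]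
  | single τ c =>
    rw [stripA_single, filtL_single, stripOf]
    by_cases h : a ∈ τ
    · rw [if_pos h, if_pos h, smul_smul, map_smul, coneA_single, one_smul, coneOf,
        if_neg (Finset.notMem_erase a τ), Finset.insert_erase h, smul_smul]
      rw [show c * sgn τ a * sgn τ a = c by rw [mul_assoc, sgn_mul_self, mul_one],
        Finsupp.smul_single, smul_eq_mul, mul_one]
    · rw [if_neg h, if_neg h, smul_zero, map_zero]

/-- evaluation of the cone at `insert a ξ`. -/
lemma coneA_apply_insert (a : V) (x : FChain V) {ξ : Finset V} (hξ : a ∉ ξ) :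
    coneA a x (insert a ξ) = sgn (insert a ξ) a * x ξ := by
  induction x using Finsupp.induction_linear with
  | zero => simp
  | add f g hf hg => rw [map_add, Finsupp.add_apply, hf, hg, Finsupp.add_apply]; ring
  | single σ c =>
    rw [coneA_single, coneOf]
    by_cases h : a ∈ σ
    · rw [if_pos h, smul_zero, Finsupp.zero_apply]
      rw [Finsupp.single_apply, if_neg (fun hh : σ = ξ => hξ (hh ▸ h))]
      ring
    · rw [if_neg h, smul_smul, Finsupp.smul_apply, Finsupp.single_apply, Finsupp.single_apply]
      by_cases h2 : σ = ξ
      · subst h2; rw [if_pos rfl, if_pos rfl]; simp [mul_comm]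
      · have : insert a σ ≠ insert a ξ := by
          intro hh
          apply h2
          have := congrArg (fun s => Finset.erase s a) hh
          simpa [Finset.erase_insert h, Finset.erase_insert hξ] using this
        rw [if_neg this, if_neg h2]
        simp

/-- extensionality on supports for linear maps. -/
lemma linear_ext_on {M : Type*} [AddCommGroup M] [Module ℤ M] {P : Finset V → Prop}
    (F G : FChain V →ₗ[ℤ] M)
    (h : ∀ σ, P σ → F (Finsupp.single σ 1) = G (Finsupp.single σ 1)) :
    ∀ x : FChain V, (∀ σ ∈ x.support, P σ) → F x = G x := by
  intro x
  induction x using Finsupp.induction with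
  | zero => intro _; rw [map_zero, map_zero]
  | single_add σ c f hσf hc ih =>
    intro hx
    have hsupp : (Finsupp.single σ c + f).support = insert σ f.support := by
      rw [Finsupp.support_add_eq, Finsupp.support_single_ne_zero σ hc]
      · rfl
      · rw [Finsupp.support_single_ne_zero σ hc]
        simpa using hσf
    rw [hsupp] at hx
    have hPσ : P σ := hx σ (Finset.mem_insert_self σ _)
    have hsingle : F (Finsupp.single σ c) = G (Finsupp.single σ c) := by
      have : Finsupp.single σ c = c • Finsupp.single σ (1:ℤ) := by
        rw [Finsupp.smul_single, smul_eq_mul, mul_one]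
      rw [this, LinearMap.map_smul, LinearMap.map_smul, h σ hPσ]
    rw [map_add, map_add, hsingle, ih (fun τ hτ => hx τ (Finset.mem_insert_of_mem hτ))]
lemma bnd_coneA (a : V) (x : FChain V) (hx : ∀ σ ∈ x.support, a ∉ σ ∧ 2 ≤ σ.card) :
    bnd (coneA a x) = x - coneA a (bnd x) := by
  have := linear_ext_on (P := fun σ => a ∉ σ ∧ 2 ≤ σ.card)
    ((bnd).comp (coneA a)) (LinearMap.id - (coneA a).comp bnd) ?_ x hx
  · simpa using this
  · intro σ hσ
    simp only [LinearMap.comp_apply, LinearMap.sub_apply, LinearMap.id_apply]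
    rw [coneA_single, one_smul, bnd_single, one_smul, bnd_coneOf hσ.1 hσ.2]

lemma bnd_coneA_vertex (a : V) (x : FChain V) (hx : ∀ σ ∈ x.support, a ∉ σ ∧ σ.card = 1) :
    bnd (coneA a x) = x - eps x • Finsupp.single {a} 1 := by
  have := linear_ext_on (P := fun σ => a ∉ σ ∧ σ.card = 1)
    ((bnd).comp (coneA a)) (LinearMap.id - eps.smulRight (Finsupp.single {a} 1)) ?_ x hx
  · simpa using this
  · intro σ hσ
    obtain ⟨v, rfl⟩ := Finset.card_eq_one.1 hσ.2
    have hav : a ≠ v := fun h => hσ.1 (h ▸ Finset.mem_singleton_self v)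
    simp only [LinearMap.comp_apply, LinearMap.sub_apply, LinearMap.id_apply,
      LinearMap.smulRight_apply]
    rw [coneA_single, one_smul, bnd_coneOf_vertex hav, eps_single, one_smul]

lemma bnd_bnd (x : FChain V) : bnd (bnd x) = (0 : FChain V) := by
  have := linear_ext_on (P := fun _ => True) ((bnd).comp bnd) (0 : FChain V →ₗ[ℤ] FChain V)
    ?_ x (fun _ _ => trivial)
  · simpa using this
  · intro σ _
    simp only [LinearMap.comp_apply, LinearMap.zero_apply]
    rw [bnd_single, one_smul, bnd_bndOf]

lemma eps_bnd_two (x : FChain V) (hx : ∀ σ ∈ x.support, σ.card = 2) :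
    eps (bnd x) = 0 := by
  have := linear_ext_on (P := fun σ => σ.card = 2) (eps.comp bnd) 0 ?_ x hx
  · simpa using this
  · intro σ hσ
    simp only [LinearMap.comp_apply, LinearMap.zero_apply]
    rw [bnd_single, one_smul, eps_bndOf hσ]

lemma filtL_apply (P : Finset V → Prop) [DecidablePred P] (x : FChain V) (ρ : Finset V) :
    filtL P x ρ = if P ρ then x ρ else 0 := by
  induction x using Finsupp.induction_linear with
  | zero => simp
  | add f g hf hg =>
    rw [map_add, Finsupp.add_apply, hf, hg, Finsupp.add_apply]
    by_cases h : P ρ <;> simp [h]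
  | single σ c =>
    rw [filtL_single]
    by_cases h : P σ
    · rw [if_pos h]
      by_cases h2 : σ = ρ
      · subst h2; rw [if_pos h]
      · rw [Finsupp.single_apply, if_neg h2]
        by_cases h3 : P ρ <;> simp [h3, Finsupp.single_apply, h2]
    · rw [if_neg h, Finsupp.zero_apply]
      by_cases h2 : σ = ρ
      · subst h2; rw [if_neg h]
      · rw [Finsupp.single_apply]
        by_cases h3 : P ρ <;> simp [h3, h2]

lemma filtL_support_subset (P : Finset V → Prop) [DecidablePred P] (x : FChain V) :
    (filtL P x).support ⊆ x.support := by
  intro ρ hρ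
  rw [Finsupp.mem_support_iff] at hρ ⊢
  rw [filtL_apply] at hρ
  intro h; apply hρ; rw [h]; simp

lemma filtL_mem_P (P : Finset V → Prop) [DecidablePred P] (x : FChain V) :
    ∀ ρ ∈ (filtL P x).support, P ρ := by
  intro ρ hρ
  rw [Finsupp.mem_support_iff, filtL_apply] at hρ
  by_contra h
  rw [if_neg h] at hρ; exact hρ rfl

lemma filtL_add_compl (P : Finset V → Prop) [DecidablePred P] (x : FChain V) :
    filtL P x + filtL (fun σ => ¬ P σ) x = x := by
  ext ρ
  rw [Finsupp.add_apply, filtL_apply, filtL_apply]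
  by_cases h : P ρ <;> simp [h]

lemma filtL_eq_self (P : Finset V → Prop) [DecidablePred P] (x : FChain V)
    (hx : ∀ σ ∈ x.support, P σ) : filtL P x = x := by
  ext ρ
  rw [filtL_apply]
  by_cases h : P ρ
  · rw [if_pos h]
  · rw [if_neg h]
    by_contra h2
    exact h (hx ρ (Finsupp.mem_support_iff.2 (fun hh => h2 hh.symm)))

lemma filtL_eq_zero (P : Finset V → Prop) [DecidablePred P] (x : FChain V)
    (hx : ∀ σ ∈ x.support, ¬ P σ) : filtL P x = 0 := by
  ext ρ
  rw [filtL_apply, Finsupp.zero_apply]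
  by_cases h : P ρ
  · rw [if_pos h]
    by_contra h2
    exact hx ρ (Finsupp.mem_support_iff.2 (fun hh => h2 hh)) h
  · rw [if_neg h]
lemma filtL_congr (P Q : Finset V → Prop) [DecidablePred P] [DecidablePred Q] (x : FChain V)
    (h : ∀ σ, P σ ↔ Q σ) : filtL P x = filtL Q x := by
  ext ρ
  rw [filtL_apply, filtL_apply]
  by_cases hρ : P ρ
  · rw [if_pos hρ, if_pos ((h ρ).1 hρ)]
  · rw [if_neg hρ, if_neg (fun hq => hρ ((h ρ).2 hq))]
lemma lsum_eq_sum (g : Finset V → FChain V) (x : FChain V) :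
    (Finsupp.lsum ℤ fun σ => LinearMap.toSpanSingleton ℤ (FChain V) (g σ)) x
      = x.sum fun σ c => c • g σ := by
  rw [Finsupp.lsum_apply]; rfl

lemma support_lsum_subset (g : Finset V → FChain V) (x : FChain V) :
    ((Finsupp.lsum ℤ fun σ => LinearMap.toSpanSingleton ℤ (FChain V) (g σ)) x).support
      ⊆ x.support.biUnion fun σ => (g σ).support := by
  rw [lsum_eq_sum]
  refine Finsupp.support_sum.trans ?_
  intro ρ hρ
  rw [Finset.mem_biUnion] at hρ ⊢
  obtain ⟨σ, hσ, hρσ⟩ := hρ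
  exact ⟨σ, hσ, Finsupp.support_smul hρσ⟩

lemma support_bndOf_subset (σ : Finset V) :
    (bndOf σ).support ⊆ σ.image (fun v => σ.erase v) := by
  rw [bndOf]
  split
  · simp
  · refine (Finsupp.support_finset_sum).trans ?_
    intro ρ hρ
    rw [Finset.mem_biUnion] at hρ
    obtain ⟨v, hv, hρv⟩ := hρ
    have := Finsupp.support_smul hρv
    rw [Finsupp.support_single_ne_zero _ one_ne_zero] at this
    rw [Finset.mem_singleton] at this
    exact Finset.mem_image.2 ⟨v, hv, this.symm⟩

lemma support_bnd (x : FChain V) :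
    ∀ ρ ∈ (bnd x).support, ∃ σ ∈ x.support, ∃ v ∈ σ, ρ = σ.erase v := by
  intro ρ hρ
  have := support_lsum_subset (fun σ => bndOf σ) x hρ
  rw [Finset.mem_biUnion] at this
  obtain ⟨σ, hσ, hρσ⟩ := this
  have := support_bndOf_subset σ hρσ
  rw [Finset.mem_image] at this
  obtain ⟨v, hv, hveq⟩ := this
  exact ⟨σ, hσ, v, hv, hveq.symm⟩

lemma support_coneA (a : V) (x : FChain V) :
    ∀ ρ ∈ (coneA a x).support, ∃ σ ∈ x.support, a ∉ σ ∧ ρ = insert a σ := by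
  intro ρ hρ
  have := support_lsum_subset (fun σ => coneOf a σ) x hρ
  rw [Finset.mem_biUnion] at this
  obtain ⟨σ, hσ, hρσ⟩ := this
  unfold coneOf at hρσ
  split at hρσ
  · simp at hρσ
  · have := Finsupp.support_smul hρσ
    rw [Finsupp.support_single_ne_zero _ one_ne_zero, Finset.mem_singleton] at this
    exact ⟨σ, hσ, by assumption, this⟩

lemma support_stripA (a : V) (x : FChain V) :
    ∀ ρ ∈ (stripA a x).support, ∃ σ ∈ x.support, a ∈ σ ∧ ρ = σ.erase a := by
  intro ρ hρ
  have := support_lsum_subset (fun σ => stripOf a σ) x hρ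
  rw [Finset.mem_biUnion] at this
  obtain ⟨σ, hσ, hρσ⟩ := this
  unfold stripOf at hρσ
  split at hρσ
  · have := Finsupp.support_smul hρσ
    rw [Finsupp.support_single_ne_zero _ one_ne_zero, Finset.mem_singleton] at this
    exact ⟨σ, hσ, by assumption, this⟩
  · simp at hρσ

/-- membership in the chain group via supports. -/
lemma mem_chains_iff (K : SC V) (p : ℕ) (x : FChain V) :
    x ∈ chains K p ↔ ∀ σ ∈ x.support, σ ∈ K.faces ∧ σ.card = p + 1 := by
  constructor
  · intro hx
    let S : Submodule ℤ (FChain V) :=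
      { carrier := {y | ∀ σ ∈ y.support, σ ∈ K.faces ∧ σ.card = p + 1}
        add_mem' := by
          intro y z hy hz σ hσ
          rcases Finset.mem_union.1 (Finsupp.support_add hσ) with h | h
          exacts [hy σ h, hz σ h]
        zero_mem' := by intro σ hσ; simp at hσ
        smul_mem' := by
          intro c y hy σ hσ
          exact hy σ (Finsupp.support_smul hσ) }
    have : chains K p ≤ S := by
      rw [chains, Submodule.span_le]
      rintro y ⟨σ, hσK, hσc, rfl⟩
      intro τ hτ
      rw [Finsupp.support_single_ne_zero _ one_ne_zero, Finset.mem_singleton] at hτ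
      subst hτ; exact ⟨hσK, hσc⟩
    exact this hx
  · intro hx
    have : x = x.sum fun σ c => Finsupp.single σ c := (Finsupp.sum_single x).symm
    rw [this]
    refine Submodule.sum_mem _ ?_
    intro σ hσ
    show Finsupp.single σ (x σ) ∈ chains K p
    have h1 := hx σ hσ
    have : Finsupp.single σ (x σ) = (x σ) • Finsupp.single σ (1:ℤ) := by
      rw [Finsupp.smul_single, smul_eq_mul, mul_one]
    rw [this]
    exact Submodule.smul_mem _ _ (Submodule.subset_span ⟨σ, h1.1, h1.2, rfl⟩)
lemma sgn_ne_zero (σ : Finset V) (v : V) : sgn σ v ≠ 0 := by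
  intro h
  have := sgn_mul_self σ v
  rw [h, mul_zero] at this
  exact zero_ne_one this

lemma key_lemma (K Khat : SC V) (a b : V) (hne : a ≠ b)
    (hab : ({a, b} : Finset V) ∈ K.faces)
    (hKhat : ∀ τ : Finset V, τ ∈ Khat.faces ↔
      (τ ∈ K.faces ∨ (τ.Nonempty ∧ ∃ σ ∈ closureOf K (starOf K {{b}}), τ ⊆ insert a σ)))
    (p : ℕ) (hpl : PLink K a b (p : ℤ))
    (z : FChain V) (hz : z ∈ chains K p) (hbd : z ∈ bdries Khat p) :
    z ∈ bdries K p := by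
  classical
  obtain ⟨chat, hchat, hchatz⟩ := Submodule.mem_map.1 hbd
  set c : FChain V := filtL (fun τ => τ ∈ K.faces) chat with hc_def
  set rest : FChain V := filtL (fun τ => ¬ τ ∈ K.faces) chat with hrest_def
  have hsplit : c + rest = chat := filtL_add_compl _ chat
  have hchat_supp : ∀ τ ∈ chat.support, τ ∈ Khat.faces ∧ τ.card = p + 2 := by
    intro τ hτ
    have := (mem_chains_iff Khat (p+1) chat).1 hchat τ hτ
    exact ⟨this.1, this.2⟩
  -- facts about the support of rest
  have hrest : ∀ τ ∈ rest.support, a ∈ τ ∧ τ.card = p + 2 ∧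
      (∃ σ'' ∈ K.faces, b ∈ σ'' ∧ τ.erase a ⊆ σ'') := by
    intro τ hτ
    have hτchat := filtL_support_subset _ chat hτ
    have hτK : τ ∉ K.faces := filtL_mem_P _ chat τ hτ
    obtain ⟨hτKhat, hτcard⟩ := hchat_supp τ hτchat
    rcases (hKhat τ).1 hτKhat with h | ⟨hτne, σ, ⟨hσK, σ'', ⟨hσ''K, s, hs, hbs⟩, hσσ''⟩, hτins⟩
    · exact absurd h hτK
    · have hbσ'' : b ∈ σ'' := by
        rw [Set.mem_singleton_iff] at hs
        subst hs
        exact hbs (Finset.mem_singleton_self b)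
      have haτ : a ∈ τ := by
        by_contra haτ
        apply hτK
        have : τ ⊆ σ := by
          intro x hx
          rcases Finset.mem_insert.1 (hτins hx) with rfl | hx2
          · exact absurd hx haτ
          · exact hx2
        exact K.down_closed σ hσK τ this hτne
      refine ⟨haτ, hτcard, σ'', hσ''K, hbσ'', ?_⟩
      intro x hx
      obtain ⟨hxa, hxτ⟩ := Finset.mem_erase.1 hx
      rcases Finset.mem_insert.1 (hτins hxτ) with rfl | hx2
      · exact absurd rfl hxa
      · exact hσσ'' hx2
  have hc_chain : c ∈ chains K (p + 1) := by
    rw [mem_chains_iff]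
    intro τ hτ
    exact ⟨filtL_mem_P _ chat τ hτ, (hchat_supp τ (filtL_support_subset _ chat hτ)).2⟩
  set d : FChain V := stripA a rest with hd_def
  have hconed : coneA a d = rest := by
    rw [hd_def, coneA_stripA]
    exact filtL_eq_self _ rest (fun τ hτ => (hrest τ hτ).1)
  have hd_supp : ∀ η ∈ d.support, a ∉ η ∧ η.card = p + 1 ∧
      (∃ σ'' ∈ K.faces, b ∈ σ'' ∧ η ⊆ σ'') := by
    intro η hη
    obtain ⟨τ, hτ, haτ, rfl⟩ := support_stripA a rest η hη
    obtain ⟨_, hcard, σ'', hσ''K, hbσ'', hsub⟩ := hrest τ hτ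
    refine ⟨Finset.notMem_erase a τ, ?_, σ'', hσ''K, hbσ'', hsub⟩
    rw [Finset.card_erase_of_mem haτ, hcard]
    omega
  have hbndchat : bnd c + bnd (coneA a d) = z := by
    rw [hconed, ← map_add, hsplit, hchatz]
  -- support of boundary of a K-chain is in K
  have hbndK : ∀ (w : FChain V) (q : ℕ), w ∈ chains K (q + 1) →
      ∀ ρ ∈ (bnd w).support, ρ ∈ K.faces ∧ ρ.card = q + 1 := by
    intro w q hw ρ hρ
    obtain ⟨σ, hσ, v, hv, rfl⟩ := support_bnd w ρ hρ
    obtain ⟨hσK, hσc⟩ := (mem_chains_iff K (q+1) w).1 hw σ hσ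
    have hcard : (σ.erase v).card = q + 1 := by
      rw [Finset.card_erase_of_mem hv, hσc]
      omega
    refine ⟨K.down_closed σ hσK _ (Finset.erase_subset v σ) ?_, hcard⟩
    rw [← Finset.card_pos, hcard]; omega

  -- supports of z and of boundaries of K-chains lie in K
  have hzK : ∀ σ ∈ z.support, σ ∈ K.faces ∧ σ.card = p + 1 := (mem_chains_iff K p z).1 hz
  rcases Nat.eq_zero_or_pos p with hp0 | hp1
  · -- case p = 0
    subst hp0
    have hd_pre : ∀ η ∈ d.support, a ∉ η ∧ η.card = 1 := fun η hη =>
      ⟨(hd_supp η hη).1, (hd_supp η hη).2.1⟩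
    have e1 : bnd (coneA a d) = d - eps d • Finsupp.single {a} 1 :=
      bnd_coneA_vertex a d hd_pre
    have hzeq : z = bnd c + d - eps d • Finsupp.single {a} 1 := by
      rw [← hbndchat, e1]; abel
    have hd_filt : filtL (fun σ => a ∉ σ) (z - bnd c) = d := by
      have hzc : z - bnd c = d - eps d • Finsupp.single {a} 1 := by
        rw [hzeq]; abel
      rw [hzc, map_sub, map_smul, filtL_single,
        if_neg (fun h : a ∉ ({a} : Finset V) => h (Finset.mem_singleton_self a)),
        smul_zero, sub_zero]
      exact filtL_eq_self _ d (fun η hη => (hd_pre η hη).1)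
    have hdK : d ∈ chains K 0 := by
      rw [mem_chains_iff]
      intro η hη
      refine ⟨?_, (hd_pre η hη).2⟩
      have : η ∈ (z - bnd c).support := by
        rw [← hd_filt] at hη
        exact filtL_support_subset _ _ hη
      rcases Finset.mem_union.1 (Finsupp.support_sub this) with h | h
      · exact (hzK η h).1
      · exact (hbndK c 0 hc_chain η h).1
    set d₀ : FChain V := filtL (fun σ => b ∉ σ) d with hd₀_def
    have hd₀_supp : ∀ η ∈ d₀.support, η ∈ d.support ∧ b ∉ η :=
      fun η hη => ⟨filtL_support_subset _ d hη, filtL_mem_P _ d η hη⟩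
    have hd1 : filtL (fun σ => ¬ b ∉ σ) d = Finsupp.single {b} (d {b}) := by
      ext ρ
      rw [filtL_apply]
      by_cases hρ : ρ = ({b} : Finset V)
      · subst hρ
        rw [if_pos (fun h => h (Finset.mem_singleton_self b)), Finsupp.single_eq_same]
      · rw [Finsupp.single_apply, if_neg (fun h : ({b} : Finset V) = ρ => hρ h.symm)]
        by_cases hbρ : b ∈ ρ
        · rw [if_pos (fun h => h hbρ)]
          by_contra hd0
          have hρs : ρ ∈ d.support := Finsupp.mem_support_iff.2 hd0
          obtain ⟨x, hx⟩ := Finset.card_eq_one.1 (hd_pre ρ hρs).2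
          apply hρ
          rw [hx] at hbρ ⊢
          rw [Finset.mem_singleton] at hbρ
          rw [hbρ]
        · rw [if_neg (fun h => h hbρ)]
    have hsplitd : d₀ + Finsupp.single {b} (d {b}) = d := by
      rw [← hd1]; exact filtL_add_compl _ d
    have hBd₀ : coneA b d₀ ∈ chains K 1 := by
      rw [mem_chains_iff]
      intro ρ hρ
      obtain ⟨η, hη, hbη, rfl⟩ := support_coneA b d₀ ρ hρ
      obtain ⟨hηd, _⟩ := hd₀_supp η hη
      obtain ⟨_, hcard, σ'', hσ''K, hbσ'', hsub⟩ := hd_supp η hηd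
      constructor
      · refine K.down_closed σ'' hσ''K _ ?_ ⟨b, Finset.mem_insert_self b η⟩
        intro x hx
        rcases Finset.mem_insert.1 hx with rfl | hx2
        · exact hbσ''
        · exact hsub hx2
      · rw [Finset.card_insert_of_notMem hbη, hcard]
    have hAb : coneA a (Finsupp.single {b} (1:ℤ)) ∈ chains K 1 := by
      rw [mem_chains_iff]
      intro ρ hρ
      obtain ⟨η, hη, haη, rfl⟩ := support_coneA a _ ρ hρ
      rw [Finsupp.support_single_ne_zero _ one_ne_zero, Finset.mem_singleton] at hη
      subst hη
      refine ⟨hab, ?_⟩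
      rw [Finset.card_insert_of_notMem haη, Finset.card_singleton]
    set c' : FChain V := c + coneA b d₀ + eps d • coneA a (Finsupp.single {b} 1) with hc'_def
    have hc'K : c' ∈ chains K 1 := by
      exact Submodule.add_mem _ (Submodule.add_mem _ hc_chain hBd₀) (Submodule.smul_mem _ _ hAb)
    have e2 : bnd (coneA b d₀) = d₀ - eps d₀ • Finsupp.single {b} 1 :=
      bnd_coneA_vertex b d₀ (fun η hη =>
        ⟨(hd₀_supp η hη).2, (hd_pre η (hd₀_supp η hη).1).2⟩)
    have e3 : bnd (coneA a (Finsupp.single {b} (1:ℤ))) =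
        Finsupp.single {b} 1 - Finsupp.single {a} 1 := by
      rw [coneA_single, one_smul, bnd_coneOf_vertex hne]
    obtain ⟨μ, hμ⟩ : ∃ μ : ℤ, Finsupp.single ({b} : Finset V) (d {b}) = μ • Finsupp.single {b} (1:ℤ) :=
      ⟨d {b}, by rw [Finsupp.smul_single, smul_eq_mul, mul_one]⟩
    have hsplitd' : d₀ + μ • Finsupp.single {b} (1:ℤ) = d := by rw [← hμ]; exact hsplitd
    have heps' : eps d = eps d₀ + μ := by
      have h := congrArg (fun t => eps t) hsplitd'
      simp only [map_add, LinearMap.map_smul, eps_single, smul_eq_mul, mul_one] at h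
      exact h.symm
    refine Submodule.mem_map.2 ⟨c', hc'K, ?_⟩
    rw [hc'_def, map_add, map_add, map_smul, e2, e3, hzeq, heps', ← hsplitd']
    rw [smul_sub, add_smul, add_smul]
    abel
  · -- case 1 ≤ p
    have hd_pre : ∀ η ∈ d.support, a ∉ η ∧ 2 ≤ η.card := fun η hη =>
      ⟨(hd_supp η hη).1, by rw [(hd_supp η hη).2.1]; omega⟩
    have e1 : bnd (coneA a d) = d - coneA a (bnd d) := bnd_coneA a d hd_pre
    have hzeq : z = bnd c + d - coneA a (bnd d) := by rw [← hbndchat, e1]; abel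
    have hd_filt : filtL (fun σ => a ∉ σ) (z - bnd c) = d := by
      have hzc : z - bnd c = d - coneA a (bnd d) := by rw [hzeq]; abel
      rw [hzc, map_sub, filtL_eq_self _ d (fun η hη => (hd_supp η hη).1),
        filtL_eq_zero _ (coneA a (bnd d)) ?_, sub_zero]
      intro ρ hρ
      obtain ⟨σ, _, _, rfl⟩ := support_coneA a (bnd d) ρ hρ
      intro hcon; exact hcon (Finset.mem_insert_self a σ)
    have hdK : d ∈ chains K p := by
      rw [mem_chains_iff]
      intro η hη
      refine ⟨?_, (hd_supp η hη).2.1⟩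
      have hmem : η ∈ (z - bnd c).support := by
        rw [← hd_filt] at hη; exact filtL_support_subset _ _ hη
      rcases Finset.mem_union.1 (Finsupp.support_sub hmem) with h | h
      · exact (hzK η h).1
      · exact (hbndK c p hc_chain η h).1
    have hconebnd : coneA a (bnd d) = bnd c + d - z := by rw [hzeq]; abel
    have hbdd : ∀ ξ ∈ (bnd d).support, a ∉ ξ ∧ ξ.card = p ∧
        (∃ σ'' ∈ K.faces, b ∈ σ'' ∧ ξ ⊆ σ'') := by
      intro ξ hξ
      obtain ⟨η, hη, w, hw, rfl⟩ := support_bnd d ξ hξ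
      obtain ⟨haη, hcard, σ'', hσ''K, hbσ'', hsub⟩ := hd_supp η hη
      exact ⟨fun h => haη (Finset.mem_of_mem_erase h),
        by rw [Finset.card_erase_of_mem hw, hcard]; omega,
        σ'', hσ''K, hbσ'', (Finset.erase_subset w η).trans hsub⟩
    have haξK : ∀ ξ ∈ (bnd d).support, insert a ξ ∈ K.faces := by
      intro ξ hξ
      have haξ : a ∉ ξ := (hbdd ξ hξ).1
      have hne0 : (coneA a (bnd d)) (insert a ξ) ≠ 0 := by
        rw [coneA_apply_insert a (bnd d) haξ]
        exact mul_ne_zero (sgn_ne_zero _ _) (Finsupp.mem_support_iff.1 hξ)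
      have hmem : insert a ξ ∈ (bnd c + d - z).support := by
        rw [← hconebnd]; exact Finsupp.mem_support_iff.2 hne0
      rcases Finset.mem_union.1 (Finsupp.support_sub hmem) with h | h
      · rcases Finset.mem_union.1 (Finsupp.support_add h) with h2 | h2
        · exact (hbndK c p hc_chain _ h2).1
        · exact ((mem_chains_iff K p d).1 hdK _ h2).1
      · exact (hzK _ h).1
    have habbK : ∀ ξ ∈ (bnd d).support, b ∉ ξ → insert a (insert b ξ) ∈ K.faces := by
      intro ξ hξ hbξ
      obtain ⟨haξ, hcard, σ'', hσ''K, hbσ'', hsub⟩ := hbdd ξ hξ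
      have hξne : ξ.Nonempty := by rw [← Finset.card_pos, hcard]; omega
      have hξK : ξ ∈ K.faces :=
        K.down_closed _ (haξK ξ hξ) ξ (Finset.subset_insert a ξ) hξne
      have hlka : ξ ∈ linkV K a := by
        simp only [linkV, linkOf, Set.mem_diff, closureOf, starOf, Set.mem_setOf_eq,
          Set.mem_singleton_iff]
        constructor
        · exact ⟨hξK, insert a ξ, ⟨haξK ξ hξ, {a}, rfl,
            Finset.singleton_subset_iff.2 (Finset.mem_insert_self a ξ)⟩,
            Finset.subset_insert a ξ⟩
        · rintro ⟨-, σ0, ⟨hσ0K, s, hs, hσ0s⟩, hσ0ξ⟩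
          obtain ⟨x, hx⟩ := K.nonempty_of_mem σ0 hσ0K
          subst hs
          have hxa := hσ0s hx
          rw [Finset.mem_singleton] at hxa
          subst hxa
          exact haξ (hσ0ξ hx)
      have hlkb : ξ ∈ linkV K b := by
        simp only [linkV, linkOf, Set.mem_diff, closureOf, starOf, Set.mem_setOf_eq,
          Set.mem_singleton_iff]
        constructor
        · exact ⟨hξK, σ'', ⟨hσ''K, {b}, rfl, Finset.singleton_subset_iff.2 hbσ''⟩, hsub⟩
        · rintro ⟨-, σ0, ⟨hσ0K, s, hs, hσ0s⟩, hσ0ξ⟩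
          obtain ⟨x, hx⟩ := K.nonempty_of_mem σ0 hσ0K
          subst hs
          have hxb := hσ0s hx
          rw [Finset.mem_singleton] at hxb
          subst hxb
          exact hbξ (hσ0ξ hx)
      rcases hpl with hple | ⟨-, hP⟩
      · exfalso
        have : (1:ℤ) ≤ (p:ℤ) := by exact_mod_cast hp1
        omega
      · have hlkE := hP ξ ⟨hlka, hlkb⟩ (by exact_mod_cast hcard)
        simp only [linkE, linkOf, Set.mem_diff, closureOf, starOf, Set.mem_setOf_eq,
          Set.mem_singleton_iff] at hlkE
        obtain ⟨⟨-, σ1, ⟨hσ1K, s, hs, hsσ1⟩, hξσ1⟩, -⟩ := hlkE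
        subst hs
        refine K.down_closed σ1 hσ1K _ (fun x hx => ?_) ⟨a, Finset.mem_insert_self _ _⟩
        rcases Finset.mem_insert.1 hx with rfl | hx2
        · exact hsσ1 (Finset.mem_insert_self x {b})
        · rcases Finset.mem_insert.1 hx2 with rfl | hx3
          · exact hsσ1 (Finset.mem_insert_of_mem (Finset.mem_singleton_self x))
          · exact hξσ1 hx3
    -- decompositions at b
    set d₀ : FChain V := filtL (fun σ => b ∉ σ) d with hd₀_def
    set u : FChain V := stripA b d with hu_def
    have hBu : coneA b u = filtL (fun σ => ¬ b ∉ σ) d := by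
      rw [hu_def, coneA_stripA]
      exact filtL_congr _ _ d (fun σ => (not_not (a := b ∈ σ)).symm)
    have hsplitd : d₀ + coneA b u = d := by rw [hBu]; exact filtL_add_compl _ d
    have hd₀s : ∀ η ∈ d₀.support, b ∉ η ∧ η ∈ d.support := fun η hη =>
      ⟨filtL_mem_P _ d η hη, filtL_support_subset _ d hη⟩
    have hus : ∀ ζ ∈ u.support, b ∉ ζ ∧ a ∉ ζ ∧ ζ.card = p := by
      intro ζ hζ
      obtain ⟨η, hη, hbη, rfl⟩ := support_stripA b d ζ hζ
      obtain ⟨haη, hcard, _⟩ := hd_supp η hη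
      exact ⟨Finset.notMem_erase b η, fun h => haη (Finset.mem_of_mem_erase h),
        by rw [Finset.card_erase_of_mem hbη, hcard]; omega⟩
    set v : FChain V := filtL (fun σ => b ∉ σ) (bnd d) with hv_def
    have hvs : ∀ ξ ∈ v.support, b ∉ ξ ∧ ξ ∈ (bnd d).support :=
      fun ξ hξ => ⟨filtL_mem_P _ _ ξ hξ, filtL_support_subset _ _ hξ⟩
    have hBd₀K : coneA b d₀ ∈ chains K (p+1) := by
      rw [mem_chains_iff]
      intro ρ hρ
      obtain ⟨η, hη, hbη, rfl⟩ := support_coneA b d₀ ρ hρ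
      obtain ⟨haη, hcard, σ'', hσ''K, hbσ'', hsub⟩ := hd_supp η (hd₀s η hη).2
      constructor
      · refine K.down_closed σ'' hσ''K _ (fun x hx => ?_) ⟨b, Finset.mem_insert_self b η⟩
        rcases Finset.mem_insert.1 hx with rfl | hx2
        exacts [hbσ'', hsub hx2]
      · rw [Finset.card_insert_of_notMem hbη, hcard]
    have hABvK : coneA a (coneA b v) ∈ chains K (p+1) := by
      rw [mem_chains_iff]
      intro ρ hρ
      obtain ⟨ρ', hρ', haρ', rfl⟩ := support_coneA a (coneA b v) ρ hρ
      obtain ⟨ξ, hξ, hbξ, rfl⟩ := support_coneA b v ρ' hρ'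
      obtain ⟨hbξ', hξbd⟩ := hvs ξ hξ
      refine ⟨habbK ξ hξbd hbξ', ?_⟩
      rw [Finset.card_insert_of_notMem haρ', Finset.card_insert_of_notMem hbξ,
        (hbdd ξ hξbd).2.1]
    have hbndd₀_bfree : ∀ ξ ∈ (bnd d₀).support, b ∉ ξ := by
      intro ξ hξ
      obtain ⟨η, hη, w, hw, rfl⟩ := support_bnd d₀ ξ hξ
      exact fun h => (hd₀s η hη).1 (Finset.mem_of_mem_erase h)
    have hv_of : ∀ W : FChain V, (∀ ρ ∈ W.support, b ∈ ρ) →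
        bnd (coneA b u) = u - W → v = bnd d₀ + u := by
      intro W hWb hCu
      have hbd : bnd d = bnd d₀ + (u - W) := by rw [← hCu, ← map_add, hsplitd]
      rw [hv_def, hbd, map_add, map_sub,
        filtL_eq_self _ (bnd d₀) hbndd₀_bfree,
        filtL_eq_self _ u (fun ζ hζ => (hus ζ hζ).1),
        filtL_eq_zero _ W (fun ρ hρ h => h (hWb ρ hρ)), sub_zero]
    obtain ⟨W, hCu, hv_eq, hCv⟩ : ∃ W : FChain V, bnd (coneA b u) = u - W ∧
        v = bnd d₀ + u ∧ bnd (coneA b v) = v - W := by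
      rcases Nat.lt_or_ge p 2 with hp2 | hp2
      · -- p = 1
        have hp1' : p = 1 := by omega
        have hu1 : ∀ ζ ∈ u.support, b ∉ ζ ∧ ζ.card = 1 := fun ζ hζ =>
          ⟨(hus ζ hζ).1, by rw [(hus ζ hζ).2.2, hp1']⟩
        have hCu : bnd (coneA b u) = u - eps u • Finsupp.single ({b} : Finset V) (1:ℤ) :=
          bnd_coneA_vertex b u hu1
        have hWb : ∀ ρ ∈ (eps u • Finsupp.single ({b} : Finset V) (1:ℤ)).support, b ∈ ρ := by
          intro ρ hρ
          have hsub := Finsupp.support_smul hρ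
          rw [Finsupp.support_single_ne_zero _ one_ne_zero, Finset.mem_singleton] at hsub
          subst hsub; exact Finset.mem_singleton_self b
        have hveq := hv_of _ hWb hCu
        refine ⟨eps u • Finsupp.single ({b} : Finset V) (1:ℤ), hCu, hveq, ?_⟩
        have hv1 : ∀ ξ ∈ v.support, b ∉ ξ ∧ ξ.card = 1 := fun ξ hξ =>
          ⟨(hvs ξ hξ).1, by rw [(hbdd ξ (hvs ξ hξ).2).2.1, hp1']⟩
        have hepsv : eps v = eps u := by
          rw [hveq, map_add, eps_bnd_two d₀ (fun η hη => by
            rw [(hd_supp η (hd₀s η hη).2).2.1, hp1']), zero_add]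
        rw [bnd_coneA_vertex b v hv1, hepsv]
      · -- p ≥ 2
        have hu2 : ∀ ζ ∈ u.support, b ∉ ζ ∧ 2 ≤ ζ.card := fun ζ hζ =>
          ⟨(hus ζ hζ).1, by rw [(hus ζ hζ).2.2]; omega⟩
        have hCu : bnd (coneA b u) = u - coneA b (bnd u) := bnd_coneA b u hu2
        have hWb : ∀ ρ ∈ (coneA b (bnd u)).support, b ∈ ρ := by
          intro ρ hρ
          obtain ⟨σ, _, _, rfl⟩ := support_coneA b (bnd u) ρ hρ
          exact Finset.mem_insert_self b σ
        have hveq := hv_of _ hWb hCu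
        refine ⟨coneA b (bnd u), hCu, hveq, ?_⟩
        have hv2 : ∀ ξ ∈ v.support, b ∉ ξ ∧ 2 ≤ ξ.card := fun ξ hξ =>
          ⟨(hvs ξ hξ).1, by rw [(hbdd ξ (hvs ξ hξ).2).2.1]; omega⟩
        have hbndv : bnd v = bnd u := by
          rw [hveq, map_add, bnd_bnd, zero_add]
        rw [bnd_coneA b v hv2, hbndv]
    -- final assembly
    have hBd₀_bnd : bnd (coneA b d₀) = d₀ - coneA b (bnd d₀) :=
      bnd_coneA b d₀ (fun η hη =>
        ⟨(hd₀s η hη).1, by rw [(hd_supp η (hd₀s η hη).2).2.1]; omega⟩)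
    have hABv_bnd : bnd (coneA a (coneA b v)) = coneA b v - coneA a (bnd (coneA b v)) := by
      refine bnd_coneA a _ (fun ρ hρ => ?_)
      obtain ⟨ξ, hξ, hbξ, rfl⟩ := support_coneA b v ρ hρ
      obtain ⟨hbξ', hξbd⟩ := hvs ξ hξ
      constructor
      · intro h
        rcases Finset.mem_insert.1 h with rfl | h2
        · exact hne rfl
        · exact (hbdd ξ hξbd).1 h2
      · rw [Finset.card_insert_of_notMem hbξ, (hbdd ξ hξbd).2.1]; omega
    refine Submodule.mem_map.2 ⟨c + coneA b d₀ + coneA a (coneA b v),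
      Submodule.add_mem _ (Submodule.add_mem _ hc_chain hBd₀K) hABvK, ?_⟩
    have h1 : bnd d = bnd d₀ + (u - W) := by rw [← hCu, ← map_add, hsplitd]
    rw [map_add, map_add, hBd₀_bnd, hABv_bnd, hCv, hzeq, h1, ← hsplitd, hv_eq]
    simp only [map_add, map_sub]
    abel
theorem statement4' (K Khat : SC V) (a b : V) (hne : a ≠ b)
    (hab : ({a, b} : Finset V) ∈ K.faces)
    (hKhat : ∀ τ : Finset V, τ ∈ Khat.faces ↔
      (τ ∈ K.faces ∨ (τ.Nonempty ∧ ∃ σ ∈ closureOf K (starOf K {{b}}), τ ⊆ insert a σ)))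
    (p : ℕ) (hpl : PLink K a b (p : ℤ))
    (φ : Hmlgy K p →ₗ[ℤ] Hmlgy Khat p)
    (hφ : ∀ (z : FChain V) (hz : z ∈ cycles K p) (hz' : z ∈ cycles Khat p),
      φ (HmlgyMk K p z hz) = HmlgyMk Khat p z hz') :
    Function.Injective φ := by
  rw [injective_iff_map_eq_zero]
  intro x hx
  obtain ⟨⟨zc, hzc⟩, rfl⟩ := Submodule.Quotient.mk_surjective _ x
  obtain ⟨hzc1, hzc2⟩ := Submodule.mem_inf.1 hzc
  have hchains : chains K p ≤ chains Khat p := by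
    refine Submodule.span_mono ?_
    rintro y ⟨σ, hσ, hc, rfl⟩
    exact ⟨σ, (hKhat σ).2 (Or.inl hσ), hc, rfl⟩
  have hz' : zc ∈ cycles Khat p := Submodule.mem_inf.2 ⟨hchains hzc1, hzc2⟩
  have heq := hφ zc hzc hz'
  have h0 : (HmlgyMk Khat p zc hz') = 0 := by
    rw [← heq]
    exact hx
  rw [HmlgyMk, Submodule.Quotient.mk_eq_zero, Submodule.mem_comap] at h0
  have hbd : zc ∈ bdries Khat p := h0
  have hres := key_lemma K Khat a b hne hab hKhat p hpl zc hzc1 hbd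
  rw [Submodule.Quotient.mk_eq_zero, Submodule.mem_comap]
  exact hres
end Aux
/-- with `K̂ = K ∪ (a * closure(St b))`, if `ab` satisfies the `p`-link
condition then the inclusion-induced map `H_p(K) → H_p(K̂)` is injective. -/
theorem statement4 (K Khat : SC V) (a b : V) (hne : a ≠ b)
    (hab : ({a, b} : Finset V) ∈ K.faces)
    (hKhat : ∀ τ : Finset V, τ ∈ Khat.faces ↔
      (τ ∈ K.faces ∨ (τ.Nonempty ∧ ∃ σ ∈ closureOf K (starOf K {{b}}), τ ⊆ insert a σ)))
    (p : ℕ) (hpl : PLink K a b (p : ℤ))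
    (φ : Hmlgy K p →ₗ[ℤ] Hmlgy Khat p)
    (hφ : ∀ (z : FChain V) (hz : z ∈ cycles K p) (hz' : z ∈ cycles Khat p),
      φ (HmlgyMk K p z hz) = HmlgyMk Khat p z hz') :
    Function.Injective φ := by
  exact statement4' K Khat a b hne hab hKhat p hpl φ hφ

end ECpaper
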